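/- Let L be a Lie algebra over ℂ and let σ : L → L be a map which is additive, conjugate-linear (σ(c • x) = (conj c) • σ(x) for all c ∈ ℂ, x ∈ L), satisfies σ([x,y]) = [σ(x), σ(y)] for all x, y ∈ L, and σ ∘ σ = id (an antilinear involutive automorphism, e.g. the conjugation with respect to a compact real form). Then the ℂ-linear map from the base change ℂ ⊗_ℝ L (the complexification of L regarded as a real Lie algebra) to the product Lie algebra L × L determined on pure tensors by c ⊗ x ↦ (c • x, c • σ(x)) is an isomorphism of complex Lie algebras. (This is the structural fact underlying Proposition 3.6: for a complex Lie algebra 𝔤 with conjugation with respect to a compact real form, 𝔤_ℂ ≅ 𝔤 ⊕ 𝔤.) -/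

import Mathlib

open scoped TensorProduct

namespace ComplexificationProd

variable {L : Type*} [LieRing L]

/-- The componentwise bracket on the product Lie algebra L × L. -/
instance : Bracket (L × L) (L × L) :=
  ⟨fun x y => (⁅x.1, y.1⁆, ⁅x.2, y.2⁆)⟩

@[simp] theorem prod_bracket_def (x y : L × L) :
    ⁅x, y⁆ = (⁅x.1, y.1⁆, ⁅x.2, y.2⁆) := rfl

/-- The product (direct sum) Lie ring structure on L × L. -/
instance : LieRing (L × L) where
  add_lie x y z := by ext <;> simp
  lie_add x y z := by ext <;> simp
  lie_self x := by ext <;> simp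
  leibniz_lie x y z := by ext <;> simp

variable [LieAlgebra ℂ L]

/-- The product complex Lie algebra structure on L × L. -/
instance : LieAlgebra ℂ (L × L) where
  lie_smul c x y := by ext <;> simp

noncomputable instance instLieRingBaseChange : LieRing (ℂ ⊗[ℝ] (RestrictScalars ℝ ℂ L)) :=
  LieAlgebra.ExtendScalars.instLieRing ℝ ℂ (RestrictScalars ℝ ℂ L)

noncomputable instance instLieAlgebraBaseChange :
    LieAlgebra ℂ (ℂ ⊗[ℝ] (RestrictScalars ℝ ℂ L)) :=
  LieAlgebra.ExtendScalars.instLieAlgebra ℝ ℂ (RestrictScalars ℝ ℂ L)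

set_option linter.unusedSectionVars false in
/-- Identification of `RestrictScalars ℝ ℂ L` with `L`. -/
noncomputable def j : RestrictScalars ℝ ℂ L → L := RestrictScalars.addEquiv ℝ ℂ L

set_option linter.unusedSectionVars false in
@[simp] theorem j_smul (r : ℝ) (x : RestrictScalars ℝ ℂ L) :
    j (r • x) = (r : ℂ) • j x := rfl

set_option linter.unusedSectionVars false in
@[simp] theorem j_add (x y : RestrictScalars ℝ ℂ L) : j (x + y) = j x + j y := rfl

set_option linter.unusedSectionVars false in
@[simp] theorem j_lie (x y : RestrictScalars ℝ ℂ L) : j ⁅x, y⁆ = ⁅j x, j y⁆ := rfl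

set_option linter.unusedSectionVars false in
@[simp] theorem j_coe (x : L) : j (x : RestrictScalars ℝ ℂ L) = x := rfl

set_option maxHeartbeats 1600000 in
theorem baseChange_lieEquiv_prod
    (σ : L → L)
    (hadd : ∀ x y : L, σ (x + y) = σ x + σ y)
    (hconj : ∀ (c : ℂ) (x : L), σ (c • x) = (starRingEnd ℂ) c • σ x)
    (hbracket : ∀ x y : L, σ ⁅x, y⁆ = ⁅σ x, σ y⁆)
    (hinvol : ∀ x : L, σ (σ x) = x) :
    ∃ e : (ℂ ⊗[ℝ] (RestrictScalars ℝ ℂ L)) ≃ₗ⁅ℂ⁆ (L × L),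
      ∀ (c : ℂ) (x : L),
        e (c ⊗ₜ[ℝ] (x : RestrictScalars ℝ ℂ L)) = (c • x, c • σ x) := by
  classical
  letI : Module ℝ L := inferInstanceAs (Module ℝ (RestrictScalars ℝ ℂ L))
  letI : IsScalarTower ℝ ℂ L :=
    ⟨fun r c x => by
      show ((r • c : ℂ)) • x = (r : ℂ) • (c • x)
      rw [Complex.real_smul, mul_smul]⟩
  have realsmulL : ∀ (r : ℝ) (y : L), r • y = (r : ℂ) • y := fun r y => rfl
  have hσ0 : σ 0 = 0 := by have := hadd 0 0; simpa using this
  have hσI : ∀ x : L, σ (Complex.I • x) = -(Complex.I • σ x) := fun x => by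
    rw [hconj, Complex.conj_I, neg_smul]
  let k : L → RestrictScalars ℝ ℂ L := fun y => y
  have kadd : ∀ a b : L, k (a + b) = k a + k b := fun _ _ => rfl
  have ksmul : ∀ (r : ℝ) (a : L), k (r • a) = r • k a := fun _ _ => rfl
  have jk : ∀ a : L, j (k a) = a := fun _ => rfl
  -- the forward linear map
  let f : RestrictScalars ℝ ℂ L →ₗ[ℝ] L × L :=
    { toFun := fun x => (j x, σ (j x))
      map_add' := fun x y => Prod.ext rfl (hadd (j x) (j y))
      map_smul' := fun r x => by
        refine Prod.ext rfl ?_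
        show σ ((r : ℂ) • j x) = r • σ (j x)
        rw [hconj, Complex.conj_ofReal]
        exact (algebraMap_smul ℂ r (σ (j x)))}
  let e : ℂ ⊗[ℝ] (RestrictScalars ℝ ℂ L) →ₗ[ℂ] L × L := f.liftBaseChange ℂ
  have he : ∀ (c : ℂ) (x : L), e (c ⊗ₜ[ℝ] k x) = (c • x, c • σ x) := by
    intro c x
    show c • ((j (x : RestrictScalars ℝ ℂ L), σ (j (x : RestrictScalars ℝ ℂ L))) : L × L) = _
    simp [Prod.smul_def]
  -- the inverse as a bare function
  let g : L × L → ℂ ⊗[ℝ] (RestrictScalars ℝ ℂ L) := fun p =>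
    (2⁻¹ : ℂ) • ((1 : ℂ) ⊗ₜ[ℝ] k (p.1 + σ p.2 : L)
      - Complex.I ⊗ₜ[ℝ] k (Complex.I • p.1 : L)
      + Complex.I ⊗ₜ[ℝ] k (Complex.I • σ p.2 : L))
  have hsur : Function.Surjective e := by
    rintro ⟨a, b⟩
    refine ⟨g (a, b), ?_⟩
    simp only [g, map_smul, map_sub, map_add, e, LinearMap.liftBaseChange_tmul, f,
      LinearMap.coe_mk, AddHom.coe_mk, jk]
    simp only [hσI, hinvol, hadd]
    refine Prod.ext ?_ ?_ <;>
      · simp only [Prod.smul_def, Prod.fst_sub, Prod.snd_sub, Prod.fst_add, Prod.snd_add,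
          Prod.smul_fst, Prod.smul_snd, smul_neg, smul_smul, Complex.I_mul_I, one_smul,
          neg_one_smul, smul_add]
        module
  -- key tensor computations
  have atom : ∀ (z : ℂ) (y : L),
      (z ⊗ₜ[ℝ] k y : ℂ ⊗[ℝ] RestrictScalars ℝ ℂ L)
        = z • ((1 : ℂ) ⊗ₜ[ℝ] k y) := fun z y => by
    rw [TensorProduct.smul_tmul', smul_eq_mul, mul_one]
  have realsmul : ∀ (r : ℝ) (t : ℂ ⊗[ℝ] RestrictScalars ℝ ℂ L), r • t = (r : ℂ) • t :=
    fun r t => (algebraMap_smul ℂ r t).symm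
  have key : ∀ (z w : ℂ) (x : L),
      (z ⊗ₜ[ℝ] k (w • x : L) : ℂ ⊗[ℝ] RestrictScalars ℝ ℂ L)
        = ((w.re : ℂ) * z) • ((1 : ℂ) ⊗ₜ[ℝ] k x)
          + ((w.im : ℂ) * z) • ((1 : ℂ) ⊗ₜ[ℝ] k (Complex.I • x : L)) := by
    intro z w x
    have hre : ((w.re : ℂ) + (w.im : ℂ) * Complex.I) = w := Complex.re_add_im w
    have hw : w • x = (w.re : ℝ) • x + (w.im : ℝ) • (Complex.I • x) := by
      rw [realsmulL, realsmulL, smul_smul, ← add_smul, hre]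
    rw [hw, kadd, ksmul, ksmul, TensorProduct.tmul_add, TensorProduct.tmul_smul, TensorProduct.tmul_smul,
      realsmul, realsmul, atom z x, atom z (Complex.I • x), smul_smul, smul_smul]
  -- g is a left inverse of e
  have hleft : ∀ t : ℂ ⊗[ℝ] RestrictScalars ℝ ℂ L, g (e t) = t := by
    intro t
    induction t using TensorProduct.induction_on with
    | zero =>
      rw [map_zero e]
      simp [g, hσ0, smul_zero, TensorProduct.tmul_zero, show k 0 = 0 from rfl]
    | tmul c x =>
      rw [show (c ⊗ₜ[ℝ] x : ℂ ⊗[ℝ] RestrictScalars ℝ ℂ L)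
            = c ⊗ₜ[ℝ] k (j x : L) from rfl, he c (j x)]
      simp only [g]
      rw [show σ (c • σ (j x)) = (starRingEnd ℂ) c • (j x) by rw [hconj, hinvol]]
      rw [show (c • j x + (starRingEnd ℂ) c • j x) = (c + (starRingEnd ℂ) c) • j x by
        rw [add_smul]]
      rw [show Complex.I • (c • j x) = (Complex.I * c) • j x from smul_smul _ _ _]
      rw [show Complex.I • ((starRingEnd ℂ) c • j x)
            = (Complex.I * (starRingEnd ℂ) c) • j x from smul_smul _ _ _]
      rw [key 1 (c + (starRingEnd ℂ) c) (j x), key Complex.I (Complex.I * c) (j x),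
        key Complex.I (Complex.I * (starRingEnd ℂ) c) (j x), atom c (j x)]
      match_scalars
      any_goals simp [Complex.ext_iff]
      any_goals ring_nf
      any_goals simp
    | add t1 t2 h1 h2 =>
      rw [map_add]
      have gadd : ∀ p q : L × L, g (p + q) = g p + g q := by
        intro p q
        simp only [g, Prod.fst_add, Prod.snd_add, hadd, kadd, smul_add, TensorProduct.tmul_add]
        module
      rw [gadd, h1, h2]
  have hinj : Function.Injective e := fun t t' h => by
    rw [← hleft t, ← hleft t', h]
  have hlie : ∀ t s : ℂ ⊗[ℝ] RestrictScalars ℝ ℂ L, e ⁅t, s⁆ = ⁅e t, e s⁆ := by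
    intro t s
    induction t using TensorProduct.induction_on with
    | zero =>
      have h0 : ⁅(0 : ℂ ⊗[ℝ] RestrictScalars ℝ ℂ L), s⁆ = 0 := zero_lie _
      have h0' : ⁅(0 : L × L), e s⁆ = 0 := zero_lie _
      rw [h0, map_zero e]
      exact h0'.symm
    | add t1 t2 h1 h2 =>
      have ha : ⁅t1 + t2, s⁆ = ⁅t1, s⁆ + ⁅t2, s⁆ := add_lie _ _ _
      have ha' : ⁅e t1 + e t2, e s⁆ = ⁅e t1, e s⁆ + ⁅e t2, e s⁆ := add_lie _ _ _
      rw [ha, map_add, h1, h2, map_add, ha']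
    | tmul c x =>
      induction s using TensorProduct.induction_on with
      | zero =>
        have h0 : ⁅c ⊗ₜ[ℝ] x, (0 : ℂ ⊗[ℝ] RestrictScalars ℝ ℂ L)⁆ = 0 := @lie_zero _ _ _ _ lieRingSelfModule (c ⊗ₜ[ℝ] x)
        have h0' : ⁅e (c ⊗ₜ[ℝ] x), (0 : L × L)⁆ = 0 := lie_zero (e (c ⊗ₜ[ℝ] x))
        rw [h0, map_zero e]
        exact h0'.symm
      | add s1 s2 h1 h2 =>
        have ha : ⁅c ⊗ₜ[ℝ] x, s1 + s2⁆ = ⁅c ⊗ₜ[ℝ] x, s1⁆ + ⁅c ⊗ₜ[ℝ] x, s2⁆ := @lie_add _ _ _ _ lieRingSelfModule (c ⊗ₜ[ℝ] x) s1 s2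
        have ha' : ⁅e (c ⊗ₜ[ℝ] x), e s1 + e s2⁆
            = ⁅e (c ⊗ₜ[ℝ] x), e s1⁆ + ⁅e (c ⊗ₜ[ℝ] x), e s2⁆
          := lie_add (e (c ⊗ₜ[ℝ] x)) (e s1) (e s2)
        rw [ha, map_add, h1, h2, map_add e, ha']
      | tmul d y =>
        show (c * d) • ((j ⁅x, y⁆, σ (j ⁅x, y⁆)) : L × L)
          = ⁅c • ((j x, σ (j x)) : L × L), d • ((j y, σ (j y)) : L × L)⁆
        refine Prod.ext ?_ ?_ <;>
          simp [Prod.smul_def, j_lie, hbracket, smul_lie, lie_smul, smul_smul, mul_comm c d]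
  let eeq : (ℂ ⊗[ℝ] RestrictScalars ℝ ℂ L) ≃ₗ[ℂ] L × L :=
    LinearEquiv.ofBijective e ⟨hinj, hsur⟩
  refine ⟨{ eeq with map_lie' := fun {t s} => hlie t s }, fun c x => he c x⟩

end ComplexificationProd
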